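/- Let f ∈ A^θ, i.e., θ(f) = f. Then θ extends uniquely to an involution of the localization A_f, and the contraction algebra of (A_f, θ) is canonically isomorphic to the localization 𝐀_f of the contraction algebra 𝐀 of (A, θ) at the element f ∈ A^θ ⊆ 𝐀. -/

import Mathlib

open LaurentPolynomial

/-- The contraction algebra `𝐀`: the `k[t]`-subalgebra of `A[√t^{±1}]`
(with `t = (√t)²`) generated by `A^θ` and `(1/√t)·A^{-θ}`. -/
noncomputable def contraction (k A : Type*) [CommRing k] [CommRing A] [Algebra k A]
    (θ : A →ₐ[k] A) : Subalgebra k (LaurentPolynomial A) :=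
  Algebra.adjoin k (insert (T 2)
    ({f | ∃ a, θ a = a ∧ f = C a} ∪ {f | ∃ a, θ a = -a ∧ f = C a * T (-1)}))

theorem C_mem_contraction {k A : Type*} [CommRing k] [CommRing A] [Algebra k A]
    (θ : A →ₐ[k] A) {f : A} (hf : θ f = f) :
    (C f : LaurentPolynomial A) ∈ contraction k A θ :=
  Algebra.subset_adjoin (Set.mem_insert_iff.mpr
    (Or.inr (Set.mem_union_left _ ⟨f, hf, rfl⟩)))

section Aux

variable {k A B : Type*} [CommRing k] [CommRing A] [CommRing B]
  [Algebra k A] [Algebra k B]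

theorem Phi_coeff (Φ : LaurentPolynomial A →ₐ[k] LaurentPolynomial B)
    (g : A →+* B)
    (hΦ : ∀ (a : A) (n : ℤ), Φ (C a * T n) = C (g a) * T n)
    (p : LaurentPolynomial A) (m : ℤ) : (Φ p).coeff m = g (p.coeff m) := by
  induction p using LaurentPolynomial.induction_on' with
  | add p q hp hq =>
      have : Φ (p + q) = Φ p + Φ q := map_add Φ p q
      rw [this]
      show (Φ p + Φ q : LaurentPolynomial B).coeff m = _
      rw [AddMonoidAlgebra.coeff_add, Finsupp.add_apply, hp, hq]
      show _ = g ((p + q : LaurentPolynomial A).coeff m)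
      rw [AddMonoidAlgebra.coeff_add, Finsupp.add_apply, map_add]
  | C_mul_T n a =>
      rw [hΦ, ← single_eq_C_mul_T, ← single_eq_C_mul_T]
      show (AddMonoidAlgebra.single n (g a)).coeff m = g ((AddMonoidAlgebra.single n a).coeff m)
      rw [AddMonoidAlgebra.coeff_single, AddMonoidAlgebra.coeff_single, Finsupp.single_apply, Finsupp.single_apply]
      split_ifs with h
      · rfl
      · rw [map_zero]

theorem C_mul_coeff (r : A) (p : LaurentPolynomial A) (m : ℤ) :
    (C r * p).coeff m = r * p.coeff m := by
  have h : (C r : LaurentPolynomial A) = AddMonoidAlgebra.single 0 r := by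
    rw [single_eq_C_mul_T, T_zero, mul_one]
  rw [h]
  exact AddMonoidAlgebra.coeff_single_zero_mul p r m

theorem Phi_maps_contraction (θ : A →ₐ[k] A) (θ' : B →ₐ[k] B)
    (Φ : LaurentPolynomial A →ₐ[k] LaurentPolynomial B) (g : A →+* B)
    (hΦ : ∀ (a : A) (n : ℤ), Φ (C a * T n) = C (g a) * T n)
    (hcomm : ∀ x : A, θ' (g x) = g (θ x))
    {p : LaurentPolynomial A} (hp : p ∈ contraction k A θ) :
    Φ p ∈ contraction k B θ' := by
  induction hp using Algebra.adjoin_induction with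
  | mem x hx =>
      rcases hx with h | h | h
      · subst h
        have : Φ (T 2) = T 2 := by
          have h2 := hΦ 1 2
          simpa using h2
        rw [this]
        exact Algebra.subset_adjoin (Set.mem_insert _ _)
      · obtain ⟨a, ha, rfl⟩ := h
        have : Φ (C a) = C (g a) := by
          have h2 := hΦ a 0
          simpa using h2
        rw [this]
        refine Algebra.subset_adjoin (Set.mem_insert_iff.mpr (Or.inr
          (Set.mem_union_left _ ⟨g a, ?_, rfl⟩)))
        rw [hcomm, ha]
      · obtain ⟨a, ha, rfl⟩ := h
        rw [hΦ]
        refine Algebra.subset_adjoin (Set.mem_insert_iff.mpr (Or.inr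
          (Set.mem_union_right _ ⟨g a, ?_, rfl⟩)))
        rw [hcomm, ha, map_neg]
  | algebraMap r => rw [AlgHom.commutes]; exact Subalgebra.algebraMap_mem _ r
  | add x y hx hy ihx ihy => rw [map_add]; exact add_mem ihx ihy
  | mul x y hx hy ihx ihy => rw [map_mul]; exact mul_mem ihx ihy

end Aux

section Aux2

variable {k A : Type*} [CommRing k] [CommRing A] [Algebra k A]
  (θ : A →ₐ[k] A) {f : A} (hf : θ f = f)
  (θ' : Localization.Away f →ₐ[k] Localization.Away f)
  (hθ' : ∀ x : A, θ' (algebraMap A (Localization.Away f) x) =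
          algebraMap A (Localization.Away f) (θ x))
  (Φ : LaurentPolynomial A →ₐ[k] LaurentPolynomial (Localization.Away f))
  (hΦ : ∀ (a : A) (n : ℤ),
          Φ (C a * T n) = C (algebraMap A (Localization.Away f) a) * T n)

include hf hθ' hΦ in
/-- Surjectivity up to powers of `C f`. -/
theorem contraction_surj_aux
    {z : LaurentPolynomial (Localization.Away f)}
    (hz : z ∈ contraction k (Localization.Away f) θ') :
    ∃ q ∈ contraction k A θ, ∃ n : ℕ,
      z * (C (algebraMap A (Localization.Away f) f)) ^ n = Φ q := by
  set g := algebraMap A (Localization.Away f) with hgdef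
  have hΦC : ∀ a : A, Φ (C a) = C (g a) := fun a => by
    have h2 := hΦ a 0; simpa using h2
  induction hz using Algebra.adjoin_induction with
  | mem x hx =>
      rcases hx with h | h | h
      · subst h
        refine ⟨T 2, Algebra.subset_adjoin (Set.mem_insert _ _), 0, ?_⟩
        have h2 := hΦ 1 2
        simp only [map_one, one_mul] at h2
        rw [pow_zero, mul_one, h2]
      · obtain ⟨a, ha, rfl⟩ := h
        obtain ⟨⟨a₀, s⟩, hs⟩ := IsLocalization.surj (Submonoid.powers f) a
        obtain ⟨m, hm⟩ := s.2
        beta_reduce at hm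
        have h1 : g (θ a₀) = g a₀ := by
          have h2 := congrArg θ' hs
          rw [map_mul, ha, hθ', hθ'] at h2
          rw [← hm, map_pow, hf, hm] at h2
          rw [← h2, ← hs]
        obtain ⟨c, hc⟩ := IsLocalization.exists_of_eq
          (M := Submonoid.powers f) (S := Localization.Away f) h1
        obtain ⟨j, hj⟩ := c.2
        beta_reduce at hj
        rw [← hj] at hc
        have ha₁ : θ (f ^ j * a₀) = f ^ j * a₀ := by
          rw [map_mul, map_pow, hf, hc]
        refine ⟨C (f ^ j * a₀), C_mem_contraction θ ha₁, m + j, ?_⟩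
        rw [hΦC, ← map_pow, ← map_mul]
        congr 1
        have : g f ^ (m + j) = g ↑s * g (f ^ j) := by
          rw [← hm, ← map_pow, ← map_mul, ← pow_add]
        rw [this, ← mul_assoc, hs, ← map_mul, mul_comm a₀]
      · obtain ⟨a, ha, rfl⟩ := h
        obtain ⟨⟨a₀, s⟩, hs⟩ := IsLocalization.surj (Submonoid.powers f) a
        obtain ⟨m, hm⟩ := s.2
        beta_reduce at hm
        have h1 : g (θ a₀) = g (-a₀) := by
          have h2 := congrArg θ' hs
          rw [map_mul, ha, hθ', hθ'] at h2
          rw [← hm, map_pow, hf, hm] at h2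
          rw [map_neg, ← h2, ← hs]
          ring
        obtain ⟨c, hc⟩ := IsLocalization.exists_of_eq
          (M := Submonoid.powers f) (S := Localization.Away f) h1
        obtain ⟨j, hj⟩ := c.2
        beta_reduce at hj
        rw [← hj] at hc
        have ha₁ : θ (f ^ j * a₀) = -(f ^ j * a₀) := by
          rw [map_mul, map_pow, hf, hc]; ring
        refine ⟨C (f ^ j * a₀) * T (-1),
          Algebra.subset_adjoin (Set.mem_insert_iff.mpr (Or.inr
            (Set.mem_union_right _ ⟨f ^ j * a₀, ha₁, rfl⟩))), m + j, ?_⟩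
        rw [hΦ, mul_right_comm, ← map_pow, ← map_mul]
        congr 2
        have : g f ^ (m + j) = g ↑s * g (f ^ j) := by
          rw [← hm, ← map_pow, ← map_mul, ← pow_add]
        rw [this, ← mul_assoc, hs, ← map_mul, mul_comm a₀]
  | algebraMap r =>
      exact ⟨algebraMap k _ r, Subalgebra.algebraMap_mem _ r, 0,
        by rw [pow_zero, mul_one, AlgHom.commutes]⟩
  | add x y hx hy ihx ihy =>
      obtain ⟨q₁, h₁, n₁, e₁⟩ := ihx
      obtain ⟨q₂, h₂, n₂, e₂⟩ := ihy
      refine ⟨q₁ * (C f) ^ n₂ + q₂ * (C f) ^ n₁,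
        add_mem (mul_mem h₁ (pow_mem (C_mem_contraction θ hf) _))
          (mul_mem h₂ (pow_mem (C_mem_contraction θ hf) _)), n₁ + n₂, ?_⟩
      rw [map_add, map_mul, map_mul, map_pow, map_pow, hΦC, ← e₁, ← e₂, pow_add]
      ring
  | mul x y hx hy ihx ihy =>
      obtain ⟨q₁, h₁, n₁, e₁⟩ := ihx
      obtain ⟨q₂, h₂, n₂, e₂⟩ := ihy
      refine ⟨q₁ * q₂, mul_mem h₁ h₂, n₁ + n₂, ?_⟩
      rw [map_mul, ← e₁, ← e₂, pow_add]
      ring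

include hΦ in
/-- kernel condition. -/
theorem contraction_eq_aux {p q : LaurentPolynomial A} (h : Φ p = Φ q) :
    ∃ N : ℕ, (C f) ^ N * p = (C f) ^ N * q := by
  set g := algebraMap A (Localization.Away f) with hgdef
  have hco : ∀ m : ℤ, g (p.coeff m) = g (q.coeff m) := fun m => by
    rw [← Phi_coeff Φ g hΦ p m, ← Phi_coeff Φ g hΦ q m, h]
  have h2 : ∀ m : ℤ, ∃ j : ℕ, f ^ j * p.coeff m = f ^ j * q.coeff m := fun m => by
    obtain ⟨c, hc⟩ := IsLocalization.exists_of_eq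
      (M := Submonoid.powers f) (S := Localization.Away f) (hco m)
    obtain ⟨j, hj⟩ := c.2
    beta_reduce at hj
    exact ⟨j, by rw [hj]; exact hc⟩
  choose j hj using h2
  refine ⟨(p.coeff.support ∪ q.coeff.support).sup j, ?_⟩
  set N := (p.coeff.support ∪ q.coeff.support).sup j with hN
  apply LaurentPolynomial.ext
  intro m
  show ((C f) ^ N * p).coeff m = ((C f) ^ N * q).coeff m
  rw [← map_pow, C_mul_coeff, C_mul_coeff]
  by_cases hm : m ∈ p.coeff.support ∪ q.coeff.support
  · have hle : j m ≤ N := Finset.le_sup hm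
    obtain ⟨d, hd⟩ := Nat.exists_eq_add_of_le hle
    rw [hd, pow_add, mul_comm (f ^ j m), mul_assoc, mul_assoc, hj m]
  · rw [Finset.mem_union, not_or] at hm
    rw [Finsupp.notMem_support_iff.mp hm.1, Finsupp.notMem_support_iff.mp hm.2]

end Aux2

set_option maxHeartbeats 1000000 in
set_option synthInstance.maxHeartbeats 400000 in
theorem contraction_localization_fixed
    (k A : Type*) [CommRing k] [CommRing A] [Algebra k A] [Invertible (2 : k)]
    (θ : A →ₐ[k] A) (hθ : θ.comp θ = AlgHom.id k A)
    (f : A) (hf : θ f = f) :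
    (∃! θ' : Localization.Away f →ₐ[k] Localization.Away f,
        ∀ x : A, θ' (algebraMap A (Localization.Away f) x) =
          algebraMap A (Localization.Away f) (θ x)) ∧
    ∀ (θ' : Localization.Away f →ₐ[k] Localization.Away f),
      (∀ x : A, θ' (algebraMap A (Localization.Away f) x) =
          algebraMap A (Localization.Away f) (θ x)) →
      (θ'.comp θ' = AlgHom.id k (Localization.Away f)) ∧
      ∀ (Φ : LaurentPolynomial A →ₐ[k] LaurentPolynomial (Localization.Away f)),
        (∀ (a : A) (n : ℤ),
          Φ (C a * T n) = C (algebraMap A (Localization.Away f) a) * T n) →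
        ∃ e : ↥(contraction k (Localization.Away f) θ') ≃ₐ[k]
            Localization.Away (⟨C f, C_mem_contraction θ hf⟩ : ↥(contraction k A θ)),
          ∀ (x : ↥(contraction k A θ))
            (hx : Φ (x : LaurentPolynomial A) ∈ contraction k (Localization.Away f) θ'),
            e ⟨Φ (x : LaurentPolynomial A), hx⟩ =
              algebraMap ↥(contraction k A θ)
                (Localization.Away
                  (⟨C f, C_mem_contraction θ hf⟩ : ↥(contraction k A θ))) x := by
  haveI : IsScalarTower k A (Localization.Away f) :=
    IsScalarTower.of_algebraMap_eq fun x => rfl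
  -- uniqueness helper
  have huniq : ∀ θ₁ θ₂ : Localization.Away f →ₐ[k] Localization.Away f,
      (∀ x : A, θ₁ (algebraMap A (Localization.Away f) x) =
        algebraMap A (Localization.Away f) (θ x)) →
      (∀ x : A, θ₂ (algebraMap A (Localization.Away f) x) =
        algebraMap A (Localization.Away f) (θ x)) → θ₁ = θ₂ := by
    intro θ₁ θ₂ h1 h2
    have h : θ₁.toRingHom = θ₂.toRingHom := by
      apply IsLocalization.ringHom_ext (Submonoid.powers f)
      ext x
      exact (h1 x).trans (h2 x).symm
    exact AlgHom.ext fun z => DFunLike.congr_fun h z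
  constructor
  · -- existence and uniqueness of the extension
    have hunit : ∀ y : Submonoid.powers f,
        IsUnit (((IsScalarTower.toAlgHom k A (Localization.Away f)).comp θ) y) := by
      rintro ⟨y, n, rfl⟩
      beta_reduce
      simp only [AlgHom.coe_comp, Function.comp_apply, map_pow, hf,
        IsScalarTower.coe_toAlgHom']
      exact IsUnit.pow n (IsLocalization.map_units (M := Submonoid.powers f)
        (Localization.Away f) ⟨f, 1, pow_one f⟩)
    refine ⟨IsLocalization.liftAlgHom (M := Submonoid.powers f) hunit, fun x => ?_, ?_⟩
    · exact IsLocalization.lift_eq _ x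
    · intro θ'' h''
      exact huniq _ _ h'' fun x => IsLocalization.lift_eq _ x
  · intro θ' hθ'
    constructor
    · -- involution property
      have h : (θ'.comp θ').toRingHom = (AlgHom.id k (Localization.Away f)).toRingHom := by
        apply IsLocalization.ringHom_ext (Submonoid.powers f)
        ext x
        show θ' (θ' (algebraMap A (Localization.Away f) x)) = algebraMap A _ x
        rw [hθ', hθ']
        have h2 := AlgHom.congr_fun hθ x
        simp only [AlgHom.coe_comp, Function.comp_apply, AlgHom.id_apply] at h2
        rw [h2]
      exact AlgHom.ext fun z => DFunLike.congr_fun h z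
    · intro Φ hΦ
      set g : A →+* Localization.Away f := algebraMap A (Localization.Away f) with hg
      have hΦC : ∀ a : A, Φ (C a) = C (g a) := fun a => by
        have h2 := hΦ a 0; simpa using h2
      -- the restriction of Φ to the contraction algebras
      let ψ : ↥(contraction k A θ) →ₐ[k] ↥(contraction k (Localization.Away f) θ') :=
        (Φ.comp (contraction k A θ).val).codRestrict
          (contraction k (Localization.Away f) θ')
          (fun x => Phi_maps_contraction θ θ' Φ g hΦ hθ' x.2)
      set b : ↥(contraction k A θ) := ⟨C f, C_mem_contraction θ hf⟩ with hb
      letI : Algebra ↥(contraction k A θ) ↥(contraction k (Localization.Away f) θ') :=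
        ψ.toRingHom.toAlgebra
      haveI : IsScalarTower k ↥(contraction k A θ)
          ↥(contraction k (Localization.Away f) θ') :=
        IsScalarTower.of_algebraMap_eq fun r => (ψ.commutes r).symm
      -- `ψ b` is a unit
      have hbu : IsUnit (ψ b) := by
        set uu : Localization.Away f := IsLocalization.Away.invSelf f with hu
        have hu1 : g f * uu = 1 := IsLocalization.Away.mul_invSelf f
        have h2 : g f * θ' uu = 1 := by
          have h3 := congrArg θ' hu1
          rw [map_mul, map_one, hθ', hf] at h3
          exact h3
        have hθu : θ' uu = uu := by
          calc θ' uu = θ' uu * (g f * uu) := by rw [hu1, mul_one]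
          _ = (g f * θ' uu) * uu := by ring
          _ = uu := by rw [h2, one_mul]
        have hmemu : (C uu : LaurentPolynomial (Localization.Away f))
            ∈ contraction k (Localization.Away f) θ' :=
          Algebra.subset_adjoin (Set.mem_insert_iff.mpr
            (Or.inr (Set.mem_union_left _ ⟨uu, hθu, rfl⟩)))
        refine IsUnit.of_mul_eq_one (a := ψ b) ⟨C uu, hmemu⟩ ?_
        apply Subtype.ext
        show Φ (C f) * C uu = 1
        rw [hΦC, ← map_mul, hu1, map_one]
      haveI hloc : IsLocalization (Submonoid.powers b)
          ↥(contraction k (Localization.Away f) θ') := by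
        refine { map_units := ?_, surj := ?_, exists_of_eq := ?_ }
        · rintro ⟨y, n, rfl⟩
          beta_reduce
          show IsUnit (ψ (b ^ n))
          rw [map_pow]
          exact hbu.pow n
        · intro z
          obtain ⟨q, hq, n, hqe⟩ := contraction_surj_aux θ hf θ' hθ' Φ hΦ z.2
          refine ⟨⟨⟨q, hq⟩, ⟨b ^ n, n, rfl⟩⟩, ?_⟩
          apply Subtype.ext
          show (z : LaurentPolynomial (Localization.Away f)) * ψ (b ^ n) = Φ q
          have : (ψ (b ^ n) : LaurentPolynomial (Localization.Away f))
              = (C (g f)) ^ n := by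
            show Φ ((C f) ^ n) = _
            rw [map_pow, hΦC]
          rw [this]
          exact hqe
        · intro x y hxy
          have h : Φ (x : LaurentPolynomial A) = Φ (y : LaurentPolynomial A) :=
            Subtype.ext_iff.mp hxy
          obtain ⟨N, hN⟩ := contraction_eq_aux Φ hΦ h
          refine ⟨⟨b ^ N, N, rfl⟩, ?_⟩
          apply Subtype.ext
          show ((b : ↥(contraction k A θ)) ^ N * x : ↥(contraction k A θ)).val
            = ((b : ↥(contraction k A θ)) ^ N * y : ↥(contraction k A θ)).val
          push_cast
          exact hN
      let e0 := IsLocalization.algEquiv (Submonoid.powers b)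
        ↥(contraction k (Localization.Away f) θ') (Localization.Away b)
      refine ⟨{ e0.toRingEquiv with commutes' := fun r => ?_ }, fun x hx => ?_⟩
      · show e0 (algebraMap k _ r) = algebraMap k _ r
        have h1 : (algebraMap k ↥(contraction k (Localization.Away f) θ') r)
            = algebraMap ↥(contraction k A θ) _ (algebraMap k ↥(contraction k A θ) r) :=
          (ψ.commutes r).symm
        rw [h1, e0.commutes]
        rfl
      · have hxe : (⟨Φ (x : LaurentPolynomial A), hx⟩ :
            ↥(contraction k (Localization.Away f) θ')) =
            algebraMap ↥(contraction k A θ) _ x := rfl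
        show e0 _ = _
        rw [hxe]
        exact e0.commutes x
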